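/- Let K ⊆ ℝⁿ be a nonempty compact set with diameter d > 0, and for v ∈ ℝⁿ let W(v) = (sup_{x∈K} ⟨v,x⟩) − (inf_{x∈K} ⟨v,x⟩). Let v_1, …, v_m be independent standard Gaussian random vectors in ℝⁿ (each with independent N(0,1) coordinates), and let Z_1, …, Z_m be independent standard normal random variables. Then for every ε > 0, Pr[ Σ_{i=1}^m W(v_i)² < ε ] ≤ Pr[ Σ_{i=1}^m Z_i² < ε/d² ], i.e., the probability that the sum of squared random directional widths is below ε is bounded by the chi-squared (m degrees of freedom) distribution function evaluated at ε/d². -/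

import Mathlib

open MeasureTheory ProbabilityTheory

section Stmt18Aux
open Real
open scoped NNReal ENNReal


lemma conv_pdf (a b : ℝ≥0) (ha : a ≠ 0) (hb : b ≠ 0) (y : ℝ) :
    ∫ x, gaussianPDFReal 0 a x * gaussianPDFReal 0 b (y - x) = gaussianPDFReal 0 (a + b) y := by
  have hA : (0:ℝ) < a := lt_of_le_of_ne a.coe_nonneg (by exact_mod_cast Ne.symm ha)
  have hB : (0:ℝ) < b := lt_of_le_of_ne b.coe_nonneg (by exact_mod_cast Ne.symm hb)
  set A : ℝ := (a:ℝ) with hAdef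
  set B : ℝ := (b:ℝ) with hBdef
  have hAB : (0:ℝ) < A + B := by linarith
  have hpi : (0:ℝ) < π := pi_pos
  set k : ℝ := (A+B)/(2*A*B) with hk
  have hkpos : 0 < k := by positivity
  set c : ℝ := A*y/(A+B) with hc
  have key : ∀ x : ℝ, gaussianPDFReal 0 a x * gaussianPDFReal 0 b (y - x)
      = ((√(2*π*A))⁻¹ * (√(2*π*B))⁻¹ * rexp (-y^2/(2*(A+B)))) * rexp (-(k*(x-c)^2)) := by
    intro x
    simp only [gaussianPDFReal, sub_zero, ← hAdef, ← hBdef]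
    rw [mul_mul_mul_comm, ← Real.exp_add]
    have hexp : -x^2/(2*A) + -(y-x)^2/(2*B) = -y^2/(2*(A+B)) + -(k*(x-c)^2) := by
      rw [hk, hc]
      field_simp
      ring
    rw [hexp, Real.exp_add]
    ring
  simp only [key]
  rw [MeasureTheory.integral_const_mul]
  have hshift : ∫ x : ℝ, rexp (-(k*(x-c)^2)) = ∫ x : ℝ, rexp (-(k*x^2)) := by
    simpa using integral_sub_right_eq_self (fun x => rexp (-(k*x^2))) c
  have hgauss : ∫ x : ℝ, rexp (-(k*x^2)) = √(π/k) := by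
    simpa using integral_gaussian k
  rw [hshift, hgauss]
  -- now pure algebra
  rw [gaussianPDFReal]
  have hconst : (√(2*π*A))⁻¹ * (√(2*π*B))⁻¹ * √(π/k) = (√(2*π*(A+B)))⁻¹ := by
    rw [← Real.sqrt_inv (2*π*A), ← Real.sqrt_inv (2*π*B), ← Real.sqrt_inv,
      ← Real.sqrt_mul (by positivity), ← Real.sqrt_mul (by positivity)]
    congr 1
    rw [hk]
    field_simp
  push_cast
  rw [sub_zero, ← hAdef, ← hBdef]
  linear_combination rexp (-y ^ 2 / (2 * (A + B))) * hconst

lemma gauss_conv (a b : ℝ≥0) :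
    ((gaussianReal 0 a).prod (gaussianReal 0 b)).map (fun p : ℝ × ℝ => p.1 + p.2)
      = gaussianReal 0 (a + b) := by
  rcases eq_or_ne a 0 with rfl | ha
  · rw [gaussianReal_zero_var, Measure.dirac_prod, zero_add,
      Measure.map_map measurable_add measurable_prodMk_left]
    simp [Function.comp_def]
  rcases eq_or_ne b 0 with rfl | hb
  · rw [gaussianReal_zero_var, Measure.prod_dirac, add_zero,
      Measure.map_map measurable_add (measurable_id'.prodMk measurable_const)]
    simp [Function.comp_def]
  have hab : a + b ≠ 0 := by positivity
  ext s hs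
  rw [Measure.map_apply measurable_add hs,
    Measure.prod_apply (hs.preimage measurable_add)]
  have h1 : ∀ x : ℝ, (gaussianReal 0 b) (Prod.mk x ⁻¹' ((fun p : ℝ × ℝ => p.1 + p.2) ⁻¹' s))
      = ∫⁻ y in s, gaussianPDF x b y := by
    intro x
    have hpre : Prod.mk x ⁻¹' ((fun p : ℝ × ℝ => p.1 + p.2) ⁻¹' s) = (fun y => x + y) ⁻¹' s := rfl
    rw [hpre, ← Measure.map_apply (measurable_const_add x) hs, gaussianReal_map_const_add,
      zero_add, gaussianReal_apply _ hb]
  simp_rw [h1]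
  rw [gaussianReal_of_var_ne_zero 0 ha,
    lintegral_withDensity_eq_lintegral_mul _ (measurable_gaussianPDF 0 a)]
  rotate_left
  · exact Measurable.lintegral_prod_right' (f := fun p : ℝ × ℝ => gaussianPDF p.1 b p.2)
      (by
        have hc : Continuous fun p : ℝ × ℝ => gaussianPDFReal p.1 b p.2 := by
          unfold gaussianPDFReal; fun_prop
        simpa [gaussianPDF, Function.comp_def] using ENNReal.measurable_ofReal.comp hc.measurable)
  have h2 : ∀ x : ℝ, (gaussianPDF 0 a x) * ∫⁻ y in s, gaussianPDF x b y
      = ∫⁻ y in s, gaussianPDF 0 a x * gaussianPDF x b y := fun x =>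
    (lintegral_const_mul _ (measurable_gaussianPDF x b)).symm
  simp_rw [Pi.mul_apply, h2]
  rw [lintegral_lintegral_swap]
  swap
  · have hc : Continuous fun p : ℝ × ℝ => gaussianPDFReal 0 a p.1 * gaussianPDFReal p.1 b p.2 := by
      unfold gaussianPDFReal; fun_prop
    have hm : Measurable fun p : ℝ × ℝ =>
        ENNReal.ofReal (gaussianPDFReal 0 a p.1 * gaussianPDFReal p.1 b p.2) :=
      ENNReal.measurable_ofReal.comp hc.measurable
    have heq : (fun p : ℝ × ℝ => gaussianPDF 0 a p.1 * gaussianPDF p.1 b p.2)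
        = fun p : ℝ × ℝ => ENNReal.ofReal (gaussianPDFReal 0 a p.1 * gaussianPDFReal p.1 b p.2) := by
      funext p
      simp [gaussianPDF, ENNReal.ofReal_mul (gaussianPDFReal_nonneg 0 a _)]
    refine Measurable.aemeasurable ?_
    have huc : Function.uncurry (fun x y : ℝ => gaussianPDF 0 a x * gaussianPDF x b y)
        = fun p : ℝ × ℝ => gaussianPDF 0 a p.1 * gaussianPDF p.1 b p.2 := rfl
    rw [huc, heq]
    exact hm
  have h3 : ∀ y : ℝ, ∫⁻ x, gaussianPDF 0 a x * gaussianPDF x b y = gaussianPDF 0 (a+b) y := by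
    intro y
    have hsub : ∀ x : ℝ, gaussianPDFReal x b y = gaussianPDFReal 0 b (y - x) := by
      intro x; simp [gaussianPDFReal]
    have hbdd : ∀ x : ℝ, ‖gaussianPDFReal x b y‖ ≤ (√(2*π*(b:ℝ)))⁻¹ := by
      intro x
      rw [Real.norm_of_nonneg (gaussianPDFReal_nonneg _ _ _), gaussianPDFReal]
      refine mul_le_of_le_one_right (by positivity) (Real.exp_le_one_iff.2 ?_)
      rw [neg_div]
      exact neg_nonpos.2 (by positivity)
    have hmb : AEStronglyMeasurable (fun x : ℝ => gaussianPDFReal x b y) volume := by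
      have : Continuous fun x : ℝ => gaussianPDFReal x b y := by
        unfold gaussianPDFReal; fun_prop
      exact this.aestronglyMeasurable
    have hi : Integrable (fun x => gaussianPDFReal 0 a x * gaussianPDFReal x b y) := by
      have := (integrable_gaussianPDFReal 0 a).bdd_mul hmb (ae_of_all _ hbdd)
      simpa [mul_comm] using this
    calc ∫⁻ x, gaussianPDF 0 a x * gaussianPDF x b y
        = ∫⁻ x, ENNReal.ofReal (gaussianPDFReal 0 a x * gaussianPDFReal x b y) := by
          simp_rw [gaussianPDF, ← ENNReal.ofReal_mul (gaussianPDFReal_nonneg 0 a _)]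
      _ = ENNReal.ofReal (∫ x, gaussianPDFReal 0 a x * gaussianPDFReal x b y) :=
          (ofReal_integral_eq_lintegral_ofReal hi (ae_of_all _ fun x =>
            mul_nonneg (gaussianPDFReal_nonneg _ _ _) (gaussianPDFReal_nonneg _ _ _))).symm
      _ = gaussianPDF 0 (a+b) y := by
          simp_rw [hsub]
          rw [conv_pdf a b ha hb y, gaussianPDF]
  simp_rw [h3]
  rw [gaussianReal_apply _ hab]

lemma gauss_sum : ∀ (n : ℕ) (u : Fin n → ℝ),
    (Measure.pi fun _ : Fin n => gaussianReal 0 1).map (fun f => ∑ j, u j * f j)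
      = gaussianReal 0 (NNReal.mk (∑ j, u j ^ 2) (by positivity)) := by
  intro n
  induction n with
  | zero =>
    intro u
    have h0 : (fun f : Fin 0 → ℝ => ∑ j, u j * f j) = fun _ => (0:ℝ) := by
      funext f; simp
    rw [h0, Measure.map_const, measure_univ, one_smul]
    have h1 : (NNReal.mk (∑ j : Fin 0, u j ^ 2) (by positivity) : ℝ≥0) = 0 := by
      ext; simp
    rw [h1, gaussianReal_zero_var]
  | succ n ih =>
    intro u
    have mp := measurePreserving_piFinSuccAbove (fun _ : Fin (n+1) => gaussianReal 0 1) 0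
    set e := MeasurableEquiv.piFinSuccAbove (fun _ : Fin (n+1) => ℝ) 0 with he
    set G : ℝ × (Fin n → ℝ) → ℝ := fun p => u 0 * p.1 + ∑ j, u j.succ * p.2 j with hG
    have hGmeas : Measurable G := by
      apply Measurable.add
      · exact (measurable_fst).const_mul _
      · exact Finset.measurable_sum _ fun j _ =>
          ((measurable_pi_apply j).comp measurable_snd).const_mul _
    have hFe : (fun f : Fin (n+1) → ℝ => ∑ j, u j * f j) = G ∘ e := by
      funext f
      simp [hG, he, Fin.sum_univ_succ, MeasurableEquiv.piFinSuccAbove,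
        Fin.insertNthEquiv, Fin.zero_succAbove, Function.comp, Fin.tail]
    rw [hFe, ← Measure.map_map hGmeas e.measurable, mp.map_eq]
    have hSmeas : Measurable (fun g : Fin n → ℝ => ∑ j, u j.succ * g j) :=
      Finset.measurable_sum _ fun j _ => (measurable_pi_apply j).const_mul _
    rw [show ((gaussianReal 0 1).prod (Measure.pi fun _ : Fin n => gaussianReal 0 1)).map G
        = (((gaussianReal 0 1).map fun x => u 0 * x).prod
            ((Measure.pi fun _ : Fin n => gaussianReal 0 1).map
              fun g => ∑ j, u j.succ * g j)).map (fun p : ℝ × ℝ => p.1 + p.2) from by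
      rw [Measure.map_prod_map _ _ (measurable_const_mul _) hSmeas,
        Measure.map_map measurable_add (Measurable.prodMap (measurable_const_mul _) hSmeas)]
      rfl]
    have hc : (gaussianReal 0 1).map (fun x : ℝ => u 0 * x)
        = gaussianReal 0 (NNReal.mk (u 0 ^ 2) (sq_nonneg _)) := by
      have := gaussianReal_map_const_mul (μ := 0) (v := 1) (u 0)
      rw [this, mul_zero, mul_one]
    rw [hc, ih (fun j => u j.succ), gauss_conv]
    congr 1
    ext
    push_cast
    rw [Fin.sum_univ_succ]

lemma map_tuple_pi {ι : Type*} [Fintype ι] {Ω : Type*} [MeasurableSpace Ω]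
    (μ : Measure Ω) [IsProbabilityMeasure μ] (X : ι → Ω → ℝ) (hmeas : ∀ i, Measurable (X i))
    (hind : iIndepFun X μ) :
    μ.map (fun ω i => X i ω) = Measure.pi (fun i => μ.map (X i)) := by
  have hpm : ∀ i, IsProbabilityMeasure (μ.map (X i)) := fun i =>
    Measure.isProbabilityMeasure_map (hmeas i).aemeasurable
  haveI := hpm
  refine (Measure.pi_eq fun s hs => ?_).symm
  rw [Measure.map_apply (measurable_pi_lambda _ hmeas) (MeasurableSet.univ_pi hs)]
  have hpre : (fun ω i => X i ω) ⁻¹' Set.pi Set.univ s = ⋂ i, X i ⁻¹' s i := by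
    ext ω; simp [Set.mem_univ_pi]
  rw [hpre, hind.meas_iInter (fun i => ⟨s i, hs i, rfl⟩)]
  exact Finset.prod_congr rfl fun i _ => (Measure.map_apply (hmeas i) (hs i)).symm

lemma curry_mp (m n : ℕ) : MeasurePreserving
    (fun g : Fin m → Fin n → ℝ => fun p : Fin m × Fin n => g p.1 p.2)
    (Measure.pi fun _ : Fin m => Measure.pi fun _ : Fin n => gaussianReal 0 1)
    (Measure.pi fun _ : Fin m × Fin n => gaussianReal 0 1) := by
  have hmeas : Measurable (fun g : Fin m → Fin n → ℝ => fun p : Fin m × Fin n => g p.1 p.2) :=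
    measurable_pi_lambda _ fun p => (measurable_pi_apply p.2).comp (measurable_pi_apply p.1)
  refine ⟨hmeas, ?_⟩
  refine (Measure.pi_eq fun s hs => ?_).symm
  rw [Measure.map_apply hmeas (MeasurableSet.univ_pi hs)]
  have hpre : (fun g : Fin m → Fin n → ℝ => fun p : Fin m × Fin n => g p.1 p.2) ⁻¹'
      Set.pi Set.univ s = Set.pi Set.univ (fun i => Set.pi Set.univ fun j => s (i, j)) := by
    ext g
    simp only [Set.mem_preimage, Set.mem_univ_pi]
    exact ⟨fun h i j => h (i, j), fun h p => h p.1 p.2⟩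
  rw [hpre, Measure.pi_pi]
  simp_rw [Measure.pi_pi]
  exact (Fintype.prod_prod_type fun p : Fin m × Fin n => gaussianReal 0 1 (s p)).symm

lemma map_T (m n : ℕ) (u : Fin n → ℝ) (hu : ∑ j, u j ^ 2 = 1) :
    (Measure.pi fun _ : Fin m × Fin n => gaussianReal 0 1).map
      (fun a : Fin m × Fin n → ℝ => fun i : Fin m => ∑ j, u j * a (i, j))
      = Measure.pi fun _ : Fin m => gaussianReal 0 1 := by
  have hTmeas : Measurable (fun a : Fin m × Fin n → ℝ => fun i : Fin m => ∑ j, u j * a (i, j)) :=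
    measurable_pi_lambda _ fun i => Finset.measurable_sum _ fun j _ =>
      (measurable_pi_apply (i, j)).const_mul _
  rw [← (curry_mp m n).map_eq, Measure.map_map hTmeas (curry_mp m n).measurable]
  have hS : MeasurePreserving (fun g : Fin n → ℝ => ∑ j, u j * g j)
      (Measure.pi fun _ : Fin n => gaussianReal 0 1) (gaussianReal 0 1) := by
    refine ⟨Finset.measurable_sum _ fun j _ => (measurable_pi_apply j).const_mul _, ?_⟩
    rw [gauss_sum n u]
    congr 1
    ext
    simpa using hu
  have hcomp : ((fun a : Fin m × Fin n → ℝ => fun i : Fin m => ∑ j, u j * a (i, j)) ∘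
      (fun g : Fin m → Fin n → ℝ => fun p : Fin m × Fin n => g p.1 p.2))
      = fun g (i : Fin m) => (fun g' : Fin n → ℝ => ∑ j, u j * g' j) (g i) := rfl
  rw [hcomp]
  exact (measurePreserving_pi _ _ fun _ => hS).map_eq

lemma exists_diam {E : Type*} [NormedAddCommGroup E] (K : Set E) (hne : K.Nonempty)
    (hcomp : IsCompact K) : ∃ x ∈ K, ∃ y ∈ K, dist x y = Metric.diam K := by
  obtain ⟨z, hzK, hmax⟩ := (hcomp.prod hcomp).exists_isMaxOn (hne.prod hne)
    (continuous_dist.comp (continuous_fst.prodMk continuous_snd)).continuousOn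
  exact ⟨z.1, hzK.1, z.2, hzK.2, le_antisymm
    (Metric.dist_le_diam_of_mem hcomp.isBounded hzK.1 hzK.2)
    (Metric.diam_le_of_forall_dist_le dist_nonneg fun x hx y hy =>
      hmax (Set.mk_mem_prod hx hy))⟩

set_option maxHeartbeats 1000000 in
theorem stmt18 {n m : ℕ} (hm : 0 < m)
    (K : Set (EuclideanSpace ℝ (Fin n))) (hne : K.Nonempty) (hcomp : IsCompact K)
    (d : ℝ) (hd : d = Metric.diam K) (hdpos : 0 < d)
    (W : EuclideanSpace ℝ (Fin n) → ℝ)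
    (hW : ∀ u, W u = sSup ((fun x => (inner ℝ u x : ℝ)) '' K) -
      sInf ((fun x => (inner ℝ u x : ℝ)) '' K))
    {Ω : Type*} [MeasurableSpace Ω] (μ : Measure Ω) [IsProbabilityMeasure μ]
    (v : Fin m → Ω → EuclideanSpace ℝ (Fin n)) (Z : Fin m → Ω → ℝ)
    (hvmeas : ∀ i, Measurable (v i))
    -- each coordinate of each Gaussian vector is standard normal
    (hvlaw : ∀ i j, μ.map (fun ω => v i ω j) = gaussianReal 0 1)
    -- all coordinates of all the vectors are mutually independent
    (hvindep : iIndepFun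
      (fun p : Fin m × Fin n => fun ω => v p.1 ω p.2) μ)
    (hZmeas : ∀ i, Measurable (Z i))
    (hZlaw : ∀ i, μ.map (Z i) = gaussianReal 0 1)
    (hZindep : iIndepFun Z μ)
    (ε : ℝ) (hε : 0 < ε) :
    μ {ω | (∑ i, W (v i ω) ^ 2) < ε} ≤ μ {ω | (∑ i, Z i ω ^ 2) < ε / d ^ 2} := by
  -- diameter is attained
  obtain ⟨p, hp, q, hq, hpq0⟩ := exists_diam K hne hcomp
  have hpq : dist p q = d := by rw [hpq0, hd]
  have hdne : d ≠ 0 := ne_of_gt hdpos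
  set u : Fin n → ℝ := fun j => (p j - q j) / d with hu_def
  have hsumsq : ∑ j, (p j - q j) ^ 2 = d ^ 2 := by
    have h1 : dist p q = √(∑ j, (p j - q j) ^ 2) := by
      rw [EuclideanSpace.dist_eq]
      congr 1
      refine Finset.sum_congr rfl fun j _ => ?_
      rw [Real.dist_eq, sq_abs]
    have h2 : √(∑ j, (p j - q j) ^ 2) = d := by rw [← h1, hpq]
    have h3 : (0:ℝ) ≤ ∑ j, (p j - q j) ^ 2 := by positivity
    calc ∑ j, (p j - q j) ^ 2 = (√(∑ j, (p j - q j) ^ 2)) ^ 2 := (Real.sq_sqrt h3).symm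
      _ = d ^ 2 := by rw [h2]
  have hu1 : ∑ j, u j ^ 2 = 1 := by
    simp only [hu_def, div_pow, ← Finset.sum_div, hsumsq]
    field_simp
  -- inner product formula
  have hinner : ∀ w z : EuclideanSpace ℝ (Fin n), (inner ℝ w z : ℝ) = ∑ j, w j * z j := by
    intro w z
    simp [PiLp.inner_apply, RCLike.inner_apply, conj_trivial]
    exact Finset.sum_congr rfl fun j _ => mul_comm _ _
  -- key pointwise bound
  have key : ∀ w : EuclideanSpace ℝ (Fin n), d ^ 2 * (∑ j, u j * w j) ^ 2 ≤ W w ^ 2 := by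
    intro w
    have hcont : Continuous fun x : EuclideanSpace ℝ (Fin n) => (inner ℝ w x : ℝ) :=
      continuous_const.inner continuous_id
    have hBddA : BddAbove ((fun x => (inner ℝ w x : ℝ)) '' K) :=
      (hcomp.image hcont).bddAbove
    have hBddB : BddBelow ((fun x => (inner ℝ w x : ℝ)) '' K) :=
      (hcomp.image hcont).bddBelow
    have hWnonneg : (inner ℝ w p : ℝ) - (inner ℝ w q : ℝ) ≤ W w := by
      rw [hW]
      have h1 : (inner ℝ w p : ℝ) ≤ sSup ((fun x => (inner ℝ w x : ℝ)) '' K) :=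
        le_csSup hBddA ⟨p, hp, rfl⟩
      have h2 : sInf ((fun x => (inner ℝ w x : ℝ)) '' K) ≤ (inner ℝ w q : ℝ) :=
        csInf_le hBddB ⟨q, hq, rfl⟩
      linarith
    have hWnonneg' : (inner ℝ w q : ℝ) - (inner ℝ w p : ℝ) ≤ W w := by
      rw [hW]
      have h1 : (inner ℝ w q : ℝ) ≤ sSup ((fun x => (inner ℝ w x : ℝ)) '' K) :=
        le_csSup hBddA ⟨q, hq, rfl⟩
      have h2 : sInf ((fun x => (inner ℝ w x : ℝ)) '' K) ≤ (inner ℝ w p : ℝ) :=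
        csInf_le hBddB ⟨p, hp, rfl⟩
      linarith
    have hsq : ((inner ℝ w p : ℝ) - (inner ℝ w q : ℝ)) ^ 2 ≤ W w ^ 2 :=
      sq_le_sq' (by linarith) hWnonneg
    have hident : (inner ℝ w p : ℝ) - (inner ℝ w q : ℝ) = d * ∑ j, u j * w j := by
      rw [hinner, hinner, hu_def, Finset.mul_sum, ← Finset.sum_sub_distrib]
      refine Finset.sum_congr rfl fun j _ => ?_
      field_simp
    calc d ^ 2 * (∑ j, u j * w j) ^ 2 = (d * ∑ j, u j * w j) ^ 2 := by ring
      _ = ((inner ℝ w p : ℝ) - (inner ℝ w q : ℝ)) ^ 2 := by rw [hident]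
      _ ≤ W w ^ 2 := hsq
  -- event inclusion
  have hsub : {ω | (∑ i, W (v i ω) ^ 2) < ε}
      ⊆ {ω | (∑ i, (∑ j, u j * v i ω j) ^ 2) < ε / d ^ 2} := by
    intro ω hω
    simp only [Set.mem_setOf_eq] at hω ⊢
    have hle : d ^ 2 * ∑ i, (∑ j, u j * v i ω j) ^ 2 ≤ ∑ i, W (v i ω) ^ 2 := by
      rw [Finset.mul_sum]
      exact Finset.sum_le_sum fun i _ => key (v i ω)
    rw [lt_div_iff₀' (by positivity)]
    exact lt_of_le_of_lt hle hω
  refine le_trans (measure_mono hsub) (le_of_eq ?_)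
  -- both remaining events have the same (chi-squared) probability
  set c0 : ℝ := ε / d ^ 2 with hc0
  have hset : MeasurableSet {t : Fin m → ℝ | ∑ i, t i ^ 2 < c0} :=
    measurableSet_lt (Finset.measurable_sum _ fun i _ => (measurable_pi_apply i).pow_const 2)
      measurable_const
  have hvjmeas : ∀ pair : Fin m × Fin n, Measurable (fun ω => v pair.1 ω pair.2) :=
    fun pair => (measurable_pi_apply pair.2).comp ((PiLp.continuous_ofLp 2 _).measurable.comp (hvmeas pair.1))
  have harrmeas : Measurable (fun ω (pair : Fin m × Fin n) => v pair.1 ω pair.2) :=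
    measurable_pi_lambda _ hvjmeas
  have hTmeas : Measurable (fun a : Fin m × Fin n → ℝ => fun i : Fin m => ∑ j, u j * a (i, j)) :=
    measurable_pi_lambda _ fun i => Finset.measurable_sum _ fun j _ =>
      (measurable_pi_apply (i, j)).const_mul _
  have hYtuple : Measurable (fun ω => fun i : Fin m => ∑ j, u j * v i ω j) :=
    measurable_pi_lambda _ fun i => Finset.measurable_sum _ fun j _ =>
      ((measurable_pi_apply j).comp ((PiLp.continuous_ofLp 2 _).measurable.comp (hvmeas i))).const_mul _
  have hZtuple : Measurable (fun ω => fun i : Fin m => Z i ω) :=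
    measurable_pi_lambda _ hZmeas
  have hmapv : μ.map (fun ω (pair : Fin m × Fin n) => v pair.1 ω pair.2)
      = Measure.pi fun _ : Fin m × Fin n => gaussianReal 0 1 := by
    rw [map_tuple_pi μ _ hvjmeas hvindep]
    congr 1
    funext pair
    exact hvlaw pair.1 pair.2
  have hmapY : μ.map (fun ω => fun i : Fin m => ∑ j, u j * v i ω j)
      = Measure.pi fun _ : Fin m => gaussianReal 0 1 := by
    have hcomp2 : (fun ω => fun i : Fin m => ∑ j, u j * v i ω j)
        = (fun a : Fin m × Fin n → ℝ => fun i : Fin m => ∑ j, u j * a (i, j))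
          ∘ (fun ω (pair : Fin m × Fin n) => v pair.1 ω pair.2) := rfl
    rw [hcomp2, ← Measure.map_map hTmeas harrmeas, hmapv, map_T m n u hu1]
  have hmapZ : μ.map (fun ω => fun i : Fin m => Z i ω)
      = Measure.pi fun _ : Fin m => gaussianReal 0 1 := by
    rw [map_tuple_pi μ _ hZmeas hZindep]
    congr 1
    funext i
    exact hZlaw i
  have hY : μ {ω | (∑ i, (∑ j, u j * v i ω j) ^ 2) < c0}
      = (Measure.pi fun _ : Fin m => gaussianReal 0 1) {t : Fin m → ℝ | ∑ i, t i ^ 2 < c0} := by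
    rw [← hmapY, Measure.map_apply hYtuple hset]
    rfl
  have hZ : μ {ω | (∑ i, Z i ω ^ 2) < c0}
      = (Measure.pi fun _ : Fin m => gaussianReal 0 1) {t : Fin m → ℝ | ∑ i, t i ^ 2 < c0} := by
    rw [← hmapZ, Measure.map_apply hZtuple hset]
    rfl
  rw [hY, hZ]

end Stmt18Aux
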